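/- For a random string of length k+1 over a 4-letter alphabet with i.i.d. uniform symbols, the probability P_1(k,p) that either the first or the last length-p substring is the unique lexicographically minimum p-substring of the string satisfies P_1(k,p) ≤ (p+1)/(k+1). -/
import Mathlib

open scoped Classical

def substr {α : Type*} (s : List α) (i len : ℕ) : List α := (s.drop i).take len

/-- The length-`p` substring of `s` starting at position `i` is the *unique* minimum
`p`-substring of `s`: it is strictly smaller than every `p`-substring at another position. -/
def uniqueMinAt {α : Type*} [LinearOrder α] (s : List α) (p i : ℕ) : Prop :=
  i + p ≤ s.length ∧ ∀ j, j + p ≤ s.length → j ≠ i → substr s i p < substr s j p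

/-- `P₁(k,p)`: probability that, for a string drawn uniformly from `{0,1,2,3}^{k+1}`,
the first or the last `p`-substring is the unique minimum `p`-substring. -/
noncomputable def P1 (k p : ℕ) : ℚ :=
  ((Finset.univ.filter fun s : Fin (k + 1) → Fin 4 =>
    uniqueMinAt (List.ofFn s) p 0 ∨ uniqueMinAt (List.ofFn s) p (k + 1 - p)).card : ℚ)
    / 4 ^ (k + 1)

namespace Stmt2Aux

open Finset

variable {n : ℕ}

lemma castinj [NeZero n] {a b : ℕ} (ha : a < n) (hb : b < n) (h : (a : ZMod n) = b) : a = b := by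
  have := congrArg ZMod.val h
  rwa [ZMod.val_cast_of_lt ha, ZMod.val_cast_of_lt hb] at this

/-- Core combinatorial lemma: on a circular sequence of `n` values, the number of positions
strictly smaller than the `w-1` following values, plus the number of positions strictly
smaller than the `w-1` preceding values, is at most `n - w + 2`. -/
lemma core [NeZero n] (w : ℕ) (hw : 2 ≤ w) (hwn : w ≤ n) {C : Type*} [LinearOrder C]
    (M : ZMod n → C) :
    (univ.filter fun z : ZMod n => ∀ d ∈ Icc 1 (w-1), M z < M (z + (d : ZMod n))).card +
    (univ.filter fun z : ZMod n => ∀ d ∈ Icc 1 (w-1), M z < M (z - (d : ZMod n))).card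
    ≤ n - w + 2 := by
  set R := univ.filter fun z : ZMod n => ∀ d ∈ Icc 1 (w-1), M z < M (z + (d : ZMod n)) with hR
  set L := univ.filter fun z : ZMod n => ∀ d ∈ Icc 1 (w-1), M z < M (z - (d : ZMod n)) with hL
  have hmemR : ∀ z ∈ R, ∀ d ∈ Icc 1 (w-1), M z < M (z + (d : ZMod n)) := by
    intro z hz; simpa [hR] using hz
  have hmemL : ∀ z ∈ L, ∀ d ∈ Icc 1 (w-1), M z < M (z - (d : ZMod n)) := by
    intro z hz; simpa [hL] using hz
  have hw1 : (1:ℕ) ≤ w - 1 := by omega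
  have C1 : ∀ r ∈ R, ∀ e ∈ L, ∀ d ∈ Icc 1 (w-1), e = r + (d : ZMod n) → False := by
    intro r hr e he d hd hre
    have h1 : M r < M e := by rw [hre]; exact hmemR r hr d hd
    have h2 := hmemL e he d hd
    rw [hre, add_sub_cancel_right] at h2
    rw [hre] at h1
    exact absurd h1 (lt_asymm h2)
  rcases L.eq_empty_or_nonempty with hLe | hLne
  · rcases R.eq_empty_or_nonempty with hRe | hRne
    · simp [hLe, hRe]
    · obtain ⟨r0, hr0, hr0max⟩ := R.exists_max_image M hRne
      have hsub : R ⊆ univ \ (Icc 1 (w-1)).image (fun d : ℕ => r0 + (d : ZMod n)) := by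
        intro r hr
        simp only [mem_sdiff, mem_univ, true_and, mem_image, not_exists]
        rintro d ⟨hd, hdr⟩
        have h1 : M r0 < M r := by rw [← hdr]; exact hmemR r0 hr0 d hd
        exact absurd h1 (not_lt.mpr (hr0max r hr))
      have hcardBad : ((Icc 1 (w-1)).image (fun d : ℕ => r0 + (d : ZMod n))).card = w - 1 := by
        rw [Finset.card_image_of_injOn, Nat.card_Icc]; · omega
        intro a ha b hb hab
        simp only [mem_coe, mem_Icc] at ha hb
        have h' : (a : ZMod n) = b := add_left_cancel hab
        exact castinj (a := a) (b := b) (by omega) (by omega) h'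
      have := card_le_card hsub
      rw [card_sdiff_of_subset (subset_univ _), hcardBad, card_univ, ZMod.card] at this
      simp [hLe]; omega
  · obtain ⟨e0, he0, he0min⟩ := L.exists_min_image M hLne
    set c : ZMod n := ((w-1 : ℕ) : ZMod n) with hc
    set A := R.image (fun z => z + c) with hA
    have hAcard : A.card = R.card := Finset.card_image_of_injective _ (add_left_injective c)
    have hdisj : Disjoint A L := by
      rw [Finset.disjoint_left]
      intro x hx hxL
      obtain ⟨r, hr, hrx⟩ := Finset.mem_image.mp hx
      exact C1 r hr x hxL (w-1) (by simp [mem_Icc]; omega) hrx.symm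
    set Bad := (Icc 1 (w-2)).image (fun d : ℕ => e0 + (d : ZMod n)) with hBad
    have hcardBad : Bad.card = w - 2 := by
      rw [hBad, Finset.card_image_of_injOn, Nat.card_Icc]; · omega
      intro a ha b hb hab
      simp only [mem_coe, mem_Icc] at ha hb
      have h' : (a : ZMod n) = b := add_left_cancel hab
      exact castinj (a := a) (b := b) (by omega) (by omega) h'
    have hsub : A ∪ L ⊆ univ \ Bad := by
      intro x hx
      simp only [mem_sdiff, mem_univ, true_and]
      intro hxBad
      obtain ⟨d, hd, hdx⟩ := Finset.mem_image.mp hxBad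
      simp only [mem_Icc] at hd
      rcases Finset.mem_union.mp hx with hxA | hxL
      · obtain ⟨r, hr, hrx⟩ := Finset.mem_image.mp hxA
        have he0eq : e0 = r + ((w-1-d : ℕ) : ZMod n) := by
          have hcast : (((w-1:ℕ) - d : ℕ) : ZMod n) = c - (d : ZMod n) := by
            rw [Nat.cast_sub (by omega)]
          rw [hcast]
          have h1 : r + c = e0 + (d : ZMod n) := by rw [hrx, hdx]
          have h2 := congrArg (fun z => z - (d : ZMod n)) h1
          simp only [add_sub_cancel_right] at h2
          rw [← h2]; ring
        exact C1 r hr e0 he0 (w-1-d) (by simp [mem_Icc]; omega) he0eq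
      · have h1 : M x < M e0 := by
          have h := hmemL x hxL d (by simp [mem_Icc]; omega)
          rw [← hdx, add_sub_cancel_right] at h
          rw [← hdx]; exact h
        exact absurd h1 (not_lt.mpr (he0min x hxL))
    have hcard := card_le_card hsub
    rw [card_sdiff_of_subset (subset_univ _), hcardBad, card_univ, ZMod.card,
      Finset.card_union_of_disjoint hdisj, hAcard] at hcard
    omega

/-- the linear string associated to a circular string -/
noncomputable def lst (t : ZMod n → Fin 4) : List (Fin 4) :=
  List.ofFn (fun i : Fin n => t ((i : ℕ) : ZMod n))

/-- circular p-mer -/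
noncomputable def Mm (p : ℕ) (t : ZMod n → Fin 4) (z : ZMod n) : List (Fin 4) :=
  List.ofFn (fun a : Fin p => t (z + ((a : ℕ) : ZMod n)))

noncomputable def rot (r : ZMod n) (t : ZMod n → Fin 4) : ZMod n → Fin 4 :=
  fun i => t (r + i)

lemma lst_length (t : ZMod n → Fin 4) : (lst t).length = n := by simp [lst]

lemma substr_lst (t : ZMod n → Fin 4) (j p : ℕ) (hj : j + p ≤ n) :
    substr (lst t) j p = List.ofFn (fun a : Fin p => t (((j + (a : ℕ)) : ℕ) : ZMod n)) := by
  apply List.ext_getElem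
  · simp [substr, lst]; omega
  · intro i h1 h2
    simp only [substr, List.getElem_take, List.getElem_drop, lst, List.getElem_ofFn]

lemma substr_rot (t : ZMod n → Fin 4) (r : ZMod n) (j p : ℕ) (hj : j + p ≤ n) :
    substr (lst (rot r t)) j p = Mm p t (r + (j : ZMod n)) := by
  rw [substr_lst _ _ _ hj, Mm]
  congr 1
  funext a
  simp only [rot]
  congr 1
  push_cast
  ring

/-- For any circular string, at most `p+1` rotations are charged. -/
lemma rotcount [NeZero n] {p : ℕ} (hp : 0 < p) (hpn : p < n) (t : ZMod n → Fin 4) :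
    (univ.filter fun r : ZMod n =>
      uniqueMinAt (lst (rot r t)) p 0 ∨ uniqueMinAt (lst (rot r t)) p (n - p)).card ≤ p + 1 := by
  set M := Mm p t with hM
  have hcore := core (n := n) (n - p + 1) (by omega) (by omega) M
  rw [Nat.add_sub_cancel] at hcore
  set Rf := univ.filter fun z : ZMod n => ∀ d ∈ Icc 1 (n - p), M z < M (z + (d : ZMod n)) with hRf
  set Lf := univ.filter fun z : ZMod n => ∀ d ∈ Icc 1 (n - p), M z < M (z - (d : ZMod n)) with hLf
  have hsub : (univ.filter fun r : ZMod n => uniqueMinAt (lst (rot r t)) p 0 ∨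
      uniqueMinAt (lst (rot r t)) p (n - p)) ⊆
      Rf ∪ Lf.image (fun z => z - ((n - p : ℕ) : ZMod n)) := by
    intro r hr
    rw [mem_filter] at hr
    rcases hr.2 with h | h
    · apply mem_union_left
      simp only [hRf, mem_filter, mem_univ, true_and]
      intro d hd
      rw [mem_Icc] at hd
      have h2 := h.2 d (by rw [lst_length]; omega) (by omega)
      rw [substr_rot t r 0 p (by omega), substr_rot t r d p (by omega)] at h2
      simpa using h2
    · apply mem_union_right
      rw [mem_image]
      refine ⟨r + ((n - p : ℕ) : ZMod n), ?_, by ring⟩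
      simp only [hLf, mem_filter, mem_univ, true_and]
      intro d hd
      rw [mem_Icc] at hd
      have h2 := h.2 (n - p - d) (by rw [lst_length]; omega) (by omega)
      rw [substr_rot t r (n - p) p (by omega), substr_rot t r (n - p - d) p (by omega)] at h2
      have hcast : (((n - p - d : ℕ)) : ZMod n) = ((n - p : ℕ) : ZMod n) - (d : ZMod n) := by
        rw [Nat.cast_sub (by omega)]
      rw [hcast] at h2
      convert h2 using 2
      ring
  calc (univ.filter fun r : ZMod n => uniqueMinAt (lst (rot r t)) p 0 ∨
      uniqueMinAt (lst (rot r t)) p (n - p)).card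
      ≤ (Rf ∪ Lf.image (fun z => z - ((n - p : ℕ) : ZMod n))).card := card_le_card hsub
    _ ≤ Rf.card + (Lf.image (fun z => z - ((n - p : ℕ) : ZMod n))).card := card_union_le _ _
    _ ≤ Rf.card + Lf.card := by
        have := card_image_le (f := fun z => z - ((n - p : ℕ) : ZMod n)) (s := Lf)
        omega
    _ ≤ n - (n - p + 1) + 2 := hcore
    _ ≤ p + 1 := by omega

/-- double counting over rotations -/
lemma maincount [NeZero n] {p : ℕ} (hp : 0 < p) (hpn : p < n) :
    n * (univ.filter fun t : ZMod n → Fin 4 =>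
      uniqueMinAt (lst t) p 0 ∨ uniqueMinAt (lst t) p (n - p)).card ≤ (p + 1) * 4 ^ n := by
  classical
  set S := univ.filter fun t : ZMod n → Fin 4 =>
    uniqueMinAt (lst t) p 0 ∨ uniqueMinAt (lst t) p (n - p) with hS
  have hrotid : ∀ (r : ZMod n) (u : ZMod n → Fin 4), rot r (rot (-r) u) = u := by
    intro r u; funext i; simp [rot]
  have hrotid' : ∀ (r : ZMod n) (u : ZMod n → Fin 4), rot (-r) (rot r u) = u := by
    intro r u; funext i; simp [rot]
  have h1 : ∀ r : ZMod n,
      (univ.filter fun t : ZMod n → Fin 4 =>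
        uniqueMinAt (lst (rot r t)) p 0 ∨ uniqueMinAt (lst (rot r t)) p (n - p)).card
      = S.card := by
    intro r
    apply Finset.card_bij' (fun t _ => rot r t) (fun u _ => rot (-r) u)
    · intro t ht
      rw [mem_filter] at ht
      rw [hS, mem_filter]
      exact ⟨mem_univ _, ht.2⟩
    · intro u hu
      rw [hS, mem_filter] at hu
      rw [mem_filter]
      refine ⟨mem_univ _, ?_⟩
      rw [hrotid r u]
      exact hu.2
    · intro t _; exact hrotid' r t
    · intro u _; exact hrotid r u
  calc n * S.card = ∑ r : ZMod n, S.card := by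
        rw [Finset.sum_const, card_univ, ZMod.card, smul_eq_mul]
    _ = ∑ r : ZMod n, (univ.filter fun t : ZMod n → Fin 4 =>
        uniqueMinAt (lst (rot r t)) p 0 ∨ uniqueMinAt (lst (rot r t)) p (n - p)).card := by
        exact Finset.sum_congr rfl fun r _ => (h1 r).symm
    _ = ∑ r : ZMod n, ∑ t : ZMod n → Fin 4,
        (if uniqueMinAt (lst (rot r t)) p 0 ∨ uniqueMinAt (lst (rot r t)) p (n - p)
          then 1 else 0) := by
        refine Finset.sum_congr rfl fun r _ => ?_
        rw [Finset.card_filter]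
    _ = ∑ t : ZMod n → Fin 4, ∑ r : ZMod n,
        (if uniqueMinAt (lst (rot r t)) p 0 ∨ uniqueMinAt (lst (rot r t)) p (n - p)
          then 1 else 0) := Finset.sum_comm
    _ = ∑ t : ZMod n → Fin 4, (univ.filter fun r : ZMod n =>
        uniqueMinAt (lst (rot r t)) p 0 ∨ uniqueMinAt (lst (rot r t)) p (n - p)).card := by
        refine Finset.sum_congr rfl fun t _ => ?_
        rw [Finset.card_filter]
    _ ≤ ∑ _t : ZMod n → Fin 4, (p + 1) :=
        Finset.sum_le_sum fun t _ => rotcount hp hpn t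
    _ = (p + 1) * 4 ^ n := by
        rw [Finset.sum_const, card_univ, Fintype.card_fun, ZMod.card, smul_eq_mul]
        simp [mul_comm]

end Stmt2Aux

open Stmt2Aux Finset in
/-- `P₁(k,p) ≤ (p+1)/(k+1)`. -/
theorem stmt2 (k p : ℕ) (hp : 0 < p) (hpk : p ≤ k) :
    P1 k p ≤ ((p : ℚ) + 1) / ((k : ℚ) + 1) := by
  classical
  set n := k + 1 with hn
  haveI : NeZero n := ⟨by omega⟩
  -- transfer the count from `Fin n → Fin 4` to `ZMod n → Fin 4`
  have hofFn : ∀ s : Fin n → Fin 4,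
      List.ofFn s = lst (fun z : ZMod n => s ⟨z.val, ZMod.val_lt z⟩) := by
    intro s
    unfold lst
    congr 1
    funext i
    congr 1
    exact Fin.ext (by simp [ZMod.val_cast_of_lt i.isLt])
  have hcards : (univ.filter fun s : Fin n → Fin 4 =>
      uniqueMinAt (List.ofFn s) p 0 ∨ uniqueMinAt (List.ofFn s) p (n - p)).card
      = (univ.filter fun t : ZMod n → Fin 4 =>
      uniqueMinAt (lst t) p 0 ∨ uniqueMinAt (lst t) p (n - p)).card := by
    apply Finset.card_bij' (fun s _ => fun z : ZMod n => s ⟨z.val, ZMod.val_lt z⟩)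
      (fun t _ => fun i : Fin n => t ((i : ℕ) : ZMod n))
    · intro s hs
      rw [mem_filter] at hs
      rw [mem_filter]
      refine ⟨mem_univ _, ?_⟩
      rw [← hofFn s]
      exact hs.2
    · intro t ht
      rw [mem_filter] at ht
      rw [mem_filter]
      refine ⟨mem_univ _, ?_⟩
      have : (fun z : ZMod n => t (((⟨z.val, ZMod.val_lt z⟩ : Fin n) : ℕ) : ZMod n)) = t := by
        funext z
        congr 1
        exact ZMod.natCast_rightInverse z
      rw [hofFn, this]
      exact ht.2
    · intro s _
      funext i
      simp [ZMod.val_cast_of_lt i.isLt]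
    · intro t _
      funext z
      exact congrArg t (ZMod.natCast_rightInverse z)
  have hmain := maincount (n := n) (p := p) hp (by omega)
  rw [← hcards] at hmain
  -- final arithmetic
  rw [P1, div_le_div_iff₀ (by positivity) (by positivity)]
  have h4 : (0:ℚ) < 4 ^ n := by positivity
  have hQ : ((n : ℚ)) * ((univ.filter fun s : Fin n → Fin 4 =>
      uniqueMinAt (List.ofFn s) p 0 ∨ uniqueMinAt (List.ofFn s) p (n - p)).card : ℚ)
      ≤ ((p : ℚ) + 1) * 4 ^ n := by
    exact_mod_cast hmain
  have hkn : ((k : ℚ) + 1) = (n : ℚ) := by rw [hn]; push_cast; ring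
  rw [hkn]
  nlinarith [hQ]
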